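/- Let G be a graph and k ≥ 1, s ∈ [k]. Define the (k,s)-tuple graph T with vertex set the set of k-tuples of V(G) inducing at most s connected components, edges between tuples that are local j-neighbors of each other, edge label j, and node labels given by isomorphism types. Then for all i ≥ 0 and all (k,s)-tuples t, u: the (k,s)-LWL colorings satisfy C_i(t) = C_i(u) if and only if the edge-labeled 1-WL colorings of the corresponding nodes in T agree after i iterations. -/

import Mathlib

open SimpleGraph Function
open scoped Classical

noncomputable section

variable {V : Type*} [Fintype V]

/-- A `k`-tuple is a `(k,s)`-tuple if it induces a subgraph with at most `s`
connected components. -/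
def IsKS (G : SimpleGraph V) (k s : ℕ) (v : Fin k → V) : Prop :=
  Nat.card (G.induce (Set.range v)).ConnectedComponent ≤ s

/-- The atomic (isomorphism) type of a `k`-tuple: which entries coincide and which are
adjacent. -/
def atp (G : SimpleGraph V) (k : ℕ) (v : Fin k → V) : Fin k → Fin k → Prop × Prop :=
  fun i j => (v i = v j, G.Adj (v i) (v j))

/-- Colors of the `(k,s)`-LWL after `i` rounds: initially an atomic type, then the
previous color together with, for each `j ∈ [k]`, the multiset of previous colors of
local `j`-neighbors. -/
def LWLColor (k : ℕ) : ℕ → Type _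
  | 0 => Fin k → Fin k → Prop × Prop
  | i + 1 => LWLColor k i × (Fin k → Multiset (LWLColor k i))

/-- The `(k,s)`-LWL coloring after `i` rounds: refine by the multisets of colors of the
local `j`-neighbors which are themselves `(k,s)`-tuples. -/
def lwl (G : SimpleGraph V) (k s : ℕ) : (i : ℕ) → (Fin k → V) → LWLColor k i
  | 0, v => atp G k v
  | i + 1, v =>
    (lwl G k s i v, fun j =>
      ((Finset.univ.filter fun x : V =>
          G.Adj (v j) x ∧ IsKS G k s (Function.update v j x)).val.map
        fun x => lwl G k s i (Function.update v j x)))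

/-- Colors of the edge-labeled 1-WL on the `(k,s)`-tuple graph after `i` rounds:
initially the node label (an atomic type), then the previous color together with the
multiset of pairs (previous color of a neighbor, label `j` of the connecting edge). -/
def TupleGraphColor (k : ℕ) : ℕ → Type _
  | 0 => Fin k → Fin k → Prop × Prop
  | i + 1 => TupleGraphColor k i × Multiset (TupleGraphColor k i × Fin k)

/-- The edge-labeled 1-WL coloring on the `(k,s)`-tuple graph after `i` rounds: the
neighbors of the node corresponding to a `(k,s)`-tuple `v` are the local `j`-neighbors
of `v` that are `(k,s)`-tuples, joined by an edge labeled `j`. -/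
def twl (G : SimpleGraph V) (k s : ℕ) : (i : ℕ) → (Fin k → V) → TupleGraphColor k i
  | 0, v => atp G k v
  | i + 1, v =>
    (twl G k s i v,
      ((Finset.univ.filter fun p : Fin k × V =>
          G.Adj (v p.1) p.2 ∧ IsKS G k s (Function.update v p.1 p.2)).val.map
        fun p => (twl G k s i (Function.update v p.1 p.2), p.1)))

private lemma map_eq_map_iff' {α β γ : Type*} (f : α → β) (g : α → γ)
    (h : ∀ a b, f a = f b ↔ g a = g b) (s t : Multiset α) :
    s.map f = t.map f ↔ s.map g = t.map g := by
  rw [← Multiset.rel_eq, ← Multiset.rel_eq, Multiset.rel_map, Multiset.rel_map]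
  exact ⟨fun r => r.mono fun a _ b _ hab => (h a b).1 hab,
    fun r => r.mono fun a _ b _ hab => (h a b).2 hab⟩

private lemma multiset_sum_filter' {β : Type*} {k : ℕ} (m : Multiset (β × Fin k)) :
    ∑ j : Fin k, m.filter (fun c => c.2 = j) = m := by
  induction m using Multiset.induction with
  | empty => simp
  | cons a s ih =>
    simp only [Multiset.filter_cons]
    rw [Finset.sum_add_distrib, ih]
    simp

private lemma twl_filter_eq (G : SimpleGraph V) (k s i : ℕ) (v : Fin k → V) (j : Fin k) :
    (((Finset.univ.filter fun p : Fin k × V =>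
        G.Adj (v p.1) p.2 ∧ IsKS G k s (Function.update v p.1 p.2)).val.map
      fun p => (twl G k s i (Function.update v p.1 p.2), p.1)).filter
        fun c => c.2 = j)
    = ((Finset.univ.filter fun x : V =>
        G.Adj (v j) x ∧ IsKS G k s (Function.update v j x)).val.map
      fun x => (twl G k s i (Function.update v j x), j)) := by
  rw [Multiset.filter_map, Finset.filter_val, Multiset.filter_filter]
  have hfin : (Finset.univ.filter fun p : Fin k × V =>
      (p.1 = j) ∧ (G.Adj (v p.1) p.2 ∧ IsKS G k s (Function.update v p.1 p.2)))
      = (Finset.univ.filter fun x : V =>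
          G.Adj (v j) x ∧ IsKS G k s (Function.update v j x)).map
        ⟨fun x => (j, x), fun a b h => by simpa using congrArg Prod.snd h⟩ := by
    ext p
    simp only [Finset.mem_filter, Finset.mem_map, Finset.mem_univ, true_and,
      Function.Embedding.coeFn_mk]
    constructor
    · rintro ⟨h1, h2, h3⟩
      exact ⟨p.2, ⟨by rwa [← h1], by rwa [← h1]⟩, by rw [← h1]; rfl⟩
    · rintro ⟨x, ⟨h2, h3⟩, rfl⟩
      exact ⟨rfl, h2, h3⟩
  have := congrArg Finset.val hfin
  rw [Finset.filter_val, Finset.map_val] at this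
  have e : (Finset.univ.val : Multiset (Fin k × V)).filter
      (fun a =>
        ((fun c : TupleGraphColor k i × Fin k => c.2 = j) ∘ fun p : Fin k × V =>
          (twl G k s i (Function.update v p.1 p.2), p.1)) a ∧
        G.Adj (v a.1) a.2 ∧ IsKS G k s (Function.update v a.1 a.2))
      = (Finset.univ.val : Multiset (Fin k × V)).filter
      (fun p =>
        (p.1 = j) ∧ (G.Adj (v p.1) p.2 ∧ IsKS G k s (Function.update v p.1 p.2))) :=
    Multiset.filter_congr (fun a _ => Iff.rfl)
  rw [e, this, Multiset.map_map]
  rfl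

private lemma lwl_iff_twl (G : SimpleGraph V) (k s : ℕ) :
    ∀ (i : ℕ) (t u : Fin k → V),
      lwl G k s i t = lwl G k s i u ↔ twl G k s i t = twl G k s i u := by
  intro i
  induction i with
  | zero => intro t u; exact Iff.rfl
  | succ i ih =>
    intro t u
    show (lwl G k s i t, _) = (lwl G k s i u, _) ↔ (twl G k s i t, _) = (twl G k s i u, _)
    rw [Prod.ext_iff, Prod.ext_iff, ih t u]
    refine and_congr_right fun _ => ?_
    rw [funext_iff]
    have key : ∀ j : Fin k,
        ((Finset.univ.filter fun x : V =>
            G.Adj (t j) x ∧ IsKS G k s (Function.update t j x)).val.map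
          fun x => lwl G k s i (Function.update t j x))
        = ((Finset.univ.filter fun x : V =>
            G.Adj (u j) x ∧ IsKS G k s (Function.update u j x)).val.map
          fun x => lwl G k s i (Function.update u j x))
        ↔
        ((Finset.univ.filter fun x : V =>
            G.Adj (t j) x ∧ IsKS G k s (Function.update t j x)).val.map
          fun x => twl G k s i (Function.update t j x))
        = ((Finset.univ.filter fun x : V =>
            G.Adj (u j) x ∧ IsKS G k s (Function.update u j x)).val.map
          fun x => twl G k s i (Function.update u j x)) := by
      intro j
      rw [show (fun x => lwl G k s i (Function.update t j x))
            = lwl G k s i ∘ Function.update t j from rfl,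
          show (fun x => lwl G k s i (Function.update u j x))
            = lwl G k s i ∘ Function.update u j from rfl,
          show (fun x => twl G k s i (Function.update t j x))
            = twl G k s i ∘ Function.update t j from rfl,
          show (fun x => twl G k s i (Function.update u j x))
            = twl G k s i ∘ Function.update u j from rfl,
          ← Multiset.map_map, ← Multiset.map_map, ← Multiset.map_map, ← Multiset.map_map]
      exact map_eq_map_iff' (lwl G k s i) (twl G k s i) ih _ _
    constructor
    · intro h
      calc ((Finset.univ.filter fun p : Fin k × V =>
              G.Adj (t p.1) p.2 ∧ IsKS G k s (Function.update t p.1 p.2)).val.map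
            fun p => (twl G k s i (Function.update t p.1 p.2), p.1))
          = ∑ j : Fin k, (((Finset.univ.filter fun p : Fin k × V =>
              G.Adj (t p.1) p.2 ∧ IsKS G k s (Function.update t p.1 p.2)).val.map
            fun p => (twl G k s i (Function.update t p.1 p.2), p.1)).filter
              fun c => c.2 = j) := (multiset_sum_filter' _).symm
        _ = ∑ j : Fin k, (((Finset.univ.filter fun p : Fin k × V =>
              G.Adj (u p.1) p.2 ∧ IsKS G k s (Function.update u p.1 p.2)).val.map
            fun p => (twl G k s i (Function.update u p.1 p.2), p.1)).filter
              fun c => c.2 = j) := by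
            refine Finset.sum_congr rfl fun j _ => ?_
            rw [twl_filter_eq, twl_filter_eq]
            have h2 := (key j).mp (h j)
            rw [show (fun x => (twl G k s i (Function.update t j x), j))
                  = (fun c => (c, j)) ∘ fun x => twl G k s i (Function.update t j x)
                from rfl,
              show (fun x => (twl G k s i (Function.update u j x), j))
                  = (fun c => (c, j)) ∘ fun x => twl G k s i (Function.update u j x)
                from rfl,
              ← Multiset.map_map, ← Multiset.map_map, h2]
        _ = _ := multiset_sum_filter' _
    · intro h j
      have h2 := congrArg (Multiset.filter fun c : TupleGraphColor k i × Fin k => c.2 = j) h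
      rw [twl_filter_eq, twl_filter_eq] at h2
      have h3 := congrArg (Multiset.map Prod.fst) h2
      rw [Multiset.map_map, Multiset.map_map] at h3
      exact (key j).mpr h3

/-- For every graph `G`, `k ≥ 1` and `s ∈ [k]`, and all `(k,s)`-tuples
`t` and `u`: the `(k,s)`-LWL colors of `t` and `u` after `i` rounds agree if and only if
the edge-labeled 1-WL colors of the corresponding nodes of the `(k,s)`-tuple graph agree
after `i` rounds. -/
theorem lwl_iff_tupleGraph_wl (G : SimpleGraph V) (k s : ℕ)
    (hk : 1 ≤ k) (hs1 : 1 ≤ s) (hsk : s ≤ k)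
    (i : ℕ) (t u : Fin k → V) (ht : IsKS G k s t) (hu : IsKS G k s u) :
    lwl G k s i t = lwl G k s i u ↔ twl G k s i t = twl G k s i u := by
  exact lwl_iff_twl G k s i t u

end
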